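/- Let 0 < p ≤ 1/3, set p_a = √(p/(1+p)) and p_r = p_a/(1−p_a), and let n ≥ 2 be an integer. Suppose p̂_a and p̂_r satisfy p_a ≤ p̂_a ≤ p_a(1 + 1/n) and p_r ≤ p̂_r ≤ p_r(1 + 1/n), and assume p_a(1 + 1/n) < 1. Then p̂_a(1−p̂_a)p̂_r / (1−p̂_a²) ≤ p·(1 + 1/n)²·(1−p_a²)/(1 − p_a²(1 + 1/n)²). -/

import Mathlib

/-- perturbing `p_a` and `p_r` upward by a relative factor `1 + 1/n` changes
the insert/delete step probability `p_a(1−p_a)p_r/(1−p_a²) = p` by at most the stated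
multiplicative factor (upper bound). -/
theorem stmt16 (p : ℝ) (hp0 : 0 < p) (hp : p ≤ 1 / 3) (n : ℕ) (hn : 2 ≤ n)
    (p_a p_r pha phr : ℝ)
    (hpa : p_a = Real.sqrt (p / (1 + p))) (hpr : p_r = p_a / (1 - p_a))
    (h1 : p_a ≤ pha) (h2 : pha ≤ p_a * (1 + 1 / n))
    (h3 : p_r ≤ phr) (h4 : phr ≤ p_r * (1 + 1 / n))
    (h5 : p_a * (1 + 1 / n) < 1) :
    pha * (1 - pha) * phr / (1 - pha ^ 2) ≤
      p * (1 + 1 / n) ^ 2 * (1 - p_a ^ 2) / (1 - p_a ^ 2 * (1 + 1 / n) ^ 2) := by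
  set c : ℝ := 1 + 1 / n with hc
  have hc1 : (1 : ℝ) ≤ c := by
    have : (0:ℝ) ≤ 1 / n := by positivity
    rw [hc]; linarith
  have hc0 : (0:ℝ) < c := lt_of_lt_of_le one_pos hc1
  have hp1 : (0:ℝ) < 1 + p := by linarith
  have hfrac0 : 0 ≤ p / (1 + p) := by positivity
  have hfrac1 : p / (1 + p) < 1 := by
    rw [div_lt_one hp1]; linarith
  have pa_pos : 0 < p_a := by
    rw [hpa]; exact Real.sqrt_pos.mpr (by positivity)
  have pa_lt1 : p_a < 1 := by
    rw [hpa]; exact (Real.sqrt_lt' one_pos).mpr (by rw [one_pow]; exact hfrac1)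
  have pa_sq : p_a ^ 2 = p / (1 + p) := by
    rw [hpa, Real.sq_sqrt hfrac0]
  have h1mpa : (0:ℝ) < 1 - p_a := by linarith
  have h1mpa2 : (0:ℝ) < 1 - p_a ^ 2 := by nlinarith
  have hpeq : p = p_a ^ 2 / (1 - p_a ^ 2) := by
    rw [pa_sq]; field_simp; ring
  have pr_pos : 0 < p_r := by
    rw [hpr]; positivity
  have hq : p_a * c < 1 := h5
  have hq2 : (0:ℝ) < 1 - (p_a * c) ^ 2 := by nlinarith
  have hqge : p_a ≤ p_a * c := by nlinarith
  have hpha1 : pha < 1 := lt_of_le_of_lt h2 h5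
  have hpha0 : 0 < pha := lt_of_lt_of_le pa_pos h1
  have hphr0 : 0 < phr := lt_of_lt_of_le pr_pos h3
  have hL : pha * (1 - pha) * phr / (1 - pha ^ 2) = pha * phr / (1 + pha) := by
    rw [show (1 - pha ^ 2) = (1 - pha) * (1 + pha) by ring,
      mul_comm pha (1 - pha), mul_assoc,
      mul_div_mul_left _ _ (by linarith : (1 - pha) ≠ 0)]
  rw [hL]
  have step1 : pha * phr / (1 + pha) ≤ (p_a * c) * (p_r * c) / (1 + p_a) := by
    apply div_le_div₀ (by positivity)
    · exact mul_le_mul h2 h4 (le_of_lt hphr0) (by positivity)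
    · linarith
    · linarith
  have step2 : (p_a * c) * (p_r * c) / (1 + p_a) = c ^ 2 * p_a ^ 2 / (1 - p_a ^ 2) := by
    rw [hpr]
    rw [show (1 - p_a ^ 2) = (1 - p_a) * (1 + p_a) by ring]
    field_simp
  have step3 : c ^ 2 * p_a ^ 2 / (1 - p_a ^ 2) ≤ c ^ 2 * p_a ^ 2 / (1 - (p_a * c) ^ 2) := by
    apply div_le_div_of_nonneg_left (by positivity) hq2
    nlinarith
  have step4 : p * c ^ 2 * (1 - p_a ^ 2) / (1 - p_a ^ 2 * c ^ 2) =
      c ^ 2 * p_a ^ 2 / (1 - (p_a * c) ^ 2) := by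
    rw [hpeq]
    rw [show (1 - (p_a * c) ^ 2) = 1 - p_a ^ 2 * c ^ 2 by ring]
    field_simp
  rw [step4]
  calc pha * phr / (1 + pha) ≤ (p_a * c) * (p_r * c) / (1 + p_a) := step1
    _ = c ^ 2 * p_a ^ 2 / (1 - p_a ^ 2) := step2
    _ ≤ c ^ 2 * p_a ^ 2 / (1 - (p_a * c) ^ 2) := step3
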